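/- arXiv:2009.05337 — 3 statements merged into one kernel-verified Lean document; each statement's English description precedes it below -/
import Mathlib

section
/- Let H be a real Hilbert space, V ⊆ H a closed subspace with orthogonal projection P_V, and A : H → H a bounded self-adjoint operator such that A maps V into V and A P_V A P_V = A P_V. Then P := P_V (1 - A) P_V is an orthogonal projection on H. -/
open scoped RealInnerProductSpace

/-- If `P_V` is the orthogonal projection onto a closed subspace `V`, `A` is a
bounded self-adjoint operator mapping `V` into `V` with `A P_V A P_V = A P_V`,
then `P = P_V (1 - A) P_V` is an orthogonal projection. -/
theorem stmt4 {H : Type*} [NormedAddCommGroup H] [InnerProductSpace ℝ H] [CompleteSpace H]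
    (V : Submodule ℝ H) (hVclosed : IsClosed (V : Set H))
    (PV A : H →L[ℝ] H)
    (hPVsa : ContinuousLinearMap.adjoint PV = PV) (hPVidem : PV.comp PV = PV)
    (hPVrange : LinearMap.range (PV : H →ₗ[ℝ] H) = V)
    (hAsa : ContinuousLinearMap.adjoint A = A)
    (hAV : ∀ x ∈ V, A x ∈ V)
    (hAPA : (A.comp PV).comp (A.comp PV) = A.comp PV)
    (P : H →L[ℝ] H)
    (hP : P = PV.comp ((ContinuousLinearMap.id ℝ H - A).comp PV)) :
    ContinuousLinearMap.adjoint P = P ∧ P.comp P = P := by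
  -- PV fixes elements of V
  have hfix : ∀ y ∈ V, PV y = y := by
    intro y hy
    rw [← hPVrange] at hy
    obtain ⟨z, rfl⟩ := hy
    have := DFunLike.congr_fun hPVidem z
    simpa using this
  -- key: PV ∘ (A ∘ PV) = A ∘ PV
  have hkey : PV.comp (A.comp PV) = A.comp PV := by
    ext x
    simp only [ContinuousLinearMap.comp_apply]
    refine hfix _ (hAV _ ?_)
    rw [← hPVrange]
    exact ⟨x, rfl⟩
  -- P = PV - A ∘ PV
  have hP' : P = PV - A.comp PV := by
    rw [hP, ContinuousLinearMap.sub_comp, ContinuousLinearMap.id_comp,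
      ContinuousLinearMap.comp_sub, hPVidem, hkey]
  constructor
  · have hadj_sub : ContinuousLinearMap.adjoint (ContinuousLinearMap.id ℝ H - A)
        = ContinuousLinearMap.id ℝ H - A := by
      rw [map_sub, hAsa, ContinuousLinearMap.adjoint_id]
    rw [hP, ContinuousLinearMap.adjoint_comp, ContinuousLinearMap.adjoint_comp,
      hadj_sub, hPVsa, ContinuousLinearMap.comp_assoc]
  · rw [hP', ContinuousLinearMap.comp_sub, ContinuousLinearMap.sub_comp,
      ContinuousLinearMap.sub_comp, hPVidem, hkey, ContinuousLinearMap.comp_assoc,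
      hPVidem, hAPA]
    abel
end

section
/- Let Ω ⊂ ℝᵈ (d ≥ 3) be a bounded connected Lipschitz domain with connected boundary. Then the intersection of the null spaces of the inner and outer scalar potentials equals the space of divergence-free tangent fields: N[P_i] ∩ N[P_o] = D(∂Ω), where D(∂Ω) = {f ∈ T(∂Ω) : (∇_T S)* f = 0}. -/
open MeasureTheory Metric Filter Topology
open scoped RealInnerProductSpace ENNReal NNReal

noncomputable section

/-- A bounded connected strongly Lipschitz domain with connected boundary:
near each boundary point, up to a rigid motion, the domain is the subgraph of a
Lipschitz function. -/
structure IsStronglyLipschitzDomain (d : ℕ) (Ω : Set (EuclideanSpace ℝ (Fin d))) : Prop where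
  d_pos : 0 < d
  isOpen : IsOpen Ω
  bounded : Bornology.IsBounded Ω
  connected : IsConnected Ω
  boundary_connected : IsConnected (frontier Ω)
  charts : ∀ x ∈ frontier Ω,
    ∃ (U : Set (EuclideanSpace ℝ (Fin d)))
      (L : EuclideanSpace ℝ (Fin d) ≃ᵢ EuclideanSpace ℝ (Fin d))
      (ψ : (Fin (d - 1) → ℝ) → ℝ) (M : ℝ≥0),
      IsOpen U ∧ x ∈ U ∧ LipschitzWith M ψ ∧
      ∀ p ∈ U, (p ∈ Ω ↔
        (L.symm p) ⟨d - 1, Nat.sub_lt d_pos one_pos⟩ <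
          ψ (fun i => (L.symm p) ⟨i.1, lt_of_lt_of_le i.2 (Nat.sub_le d 1)⟩))

/-- The surface measure on the boundary: the `(d-1)`-dimensional Hausdorff
measure restricted to `∂Ω`. -/
def surfaceMeasure (d : ℕ) (Ω : Set (EuclideanSpace ℝ (Fin d))) :
    Measure (EuclideanSpace ℝ (Fin d)) :=
  (μH[((d : ℝ) - 1)]).restrict (frontier Ω)

/-- The surface area of the unit sphere in `ℝᵈ`. -/
def sphereArea (d : ℕ) : ℝ :=
  ((μH[((d : ℝ) - 1)]) (sphere (0 : EuclideanSpace ℝ (Fin d)) 1)).toReal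


/-- Lemma 4.2: the intersection of the null spaces of the inner and outer
scalar potentials (equivalently, of the boundary operators `B_i` and `B_o`)
equals the space `D(∂Ω)` of divergence-free tangent fields, i.e. `f` is killed
by both boundary operators iff `f` is tangent and `(∇_T S)* f = 0`. -/
theorem stmt15 {d : ℕ} (hd : 3 ≤ d) (Ω : Set (EuclideanSpace ℝ (Fin d)))
    (hΩ : IsStronglyLipschitzDomain d Ω)
    -- the outward unit normal field on `∂Ω`
    (η : EuclideanSpace ℝ (Fin d) → EuclideanSpace ℝ (Fin d))
    (hη : ∀ᵐ q ∂(surfaceMeasure d Ω), ‖η q‖ = 1 ∧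
      ∀ᶠ t in 𝓝[>] (0 : ℝ), q + t • η q ∈ (closure Ω)ᶜ ∧ q - t • η q ∈ Ω)
    -- the boundary double layer potential `K`
    (K : Lp ℝ 2 (surfaceMeasure d Ω) →L[ℝ] Lp ℝ 2 (surfaceMeasure d Ω))
    (hK : ∀ f : Lp ℝ 2 (surfaceMeasure d Ω), ∀ᵐ p ∂(surfaceMeasure d Ω),
      Tendsto (fun ε : ℝ => (1 / sphereArea d) *
          ∫ q in {q | ε ≤ dist q p}, (⟪q - p, η q⟫ / dist q p ^ d) * f q
            ∂(surfaceMeasure d Ω))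
        (𝓝[>] 0) (𝓝 (K f p)))
    -- `(∇_T S)*`, given by its principal value integral
    (GSstar : Lp (EuclideanSpace ℝ (Fin d)) 2 (surfaceMeasure d Ω) →L[ℝ]
        Lp ℝ 2 (surfaceMeasure d Ω))
    (hGSstar : ∀ τ : Lp (EuclideanSpace ℝ (Fin d)) 2 (surfaceMeasure d Ω),
      ∀ᵐ p ∂(surfaceMeasure d Ω),
      Tendsto (fun ε : ℝ => (1 / sphereArea d) *
          ∫ q in {q | ε ≤ dist q p}, ⟪q - p, τ q⟫ / dist p q ^ d ∂(surfaceMeasure d Ω))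
        (𝓝[>] 0) (𝓝 (GSstar τ p)))
    -- a field `f` with normal part `f_η` and tangential part `f_T`
    (f : Lp (EuclideanSpace ℝ (Fin d)) 2 (surfaceMeasure d Ω))
    (fη : Lp ℝ 2 (surfaceMeasure d Ω))
    (fT : Lp (EuclideanSpace ℝ (Fin d)) 2 (surfaceMeasure d Ω))
    (hdecomp : ∀ᵐ q ∂(surfaceMeasure d Ω),
      f q = fη q • η q + fT q ∧ ⟪fT q, η q⟫ = 0) :
    -- `f ∈ N[P_i] ∩ N[P_o]`  ↔  `f ∈ D(∂Ω)`
    ((((1 / 2 : ℝ) • fη + K fη) + GSstar fT = 0 ∧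
        -((1 / 2 : ℝ) • fη - K fη) + GSstar fT = 0) ↔
      ((∀ᵐ q ∂(surfaceMeasure d Ω), ⟪f q, η q⟫ = 0) ∧ GSstar f = 0)) := by
  constructor
  · rintro ⟨h1, h2⟩
    have hfη : fη = 0 := by
      have hsub : (((1 / 2 : ℝ) • fη + K fη) + GSstar fT)
          - (-((1 / 2 : ℝ) • fη - K fη) + GSstar fT) = fη := by module
      rw [h1, h2, sub_zero] at hsub
      exact hsub.symm
    have hG : GSstar fT = 0 := by
      simpa [hfη] using h1
    have hfη0 : ⇑fη =ᵐ[surfaceMeasure d Ω] 0 := by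
      rw [hfη]; exact Lp.coeFn_zero ℝ 2 (surfaceMeasure d Ω)
    have hffT : ⇑f =ᵐ[surfaceMeasure d Ω] ⇑fT := by
      filter_upwards [hdecomp, hfη0] with q hq hq0
      simp [hq.1, hq0]
    refine ⟨?_, ?_⟩
    · filter_upwards [hdecomp, hfη0] with q hq hq0
      simp [hq.1, hq0, inner_add_left, real_inner_smul_left, hq.2]
    · have : f = fT := Lp.ext hffT
      rw [this, hG]
  · rintro ⟨hinner, hGf⟩
    have hfη0 : ⇑fη =ᵐ[surfaceMeasure d Ω] 0 := by
      filter_upwards [hdecomp, hη, hinner] with q hq hη1 hi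
      have : ⟪f q, η q⟫ = fη q := by
        rw [hq.1, inner_add_left, real_inner_smul_left, hq.2,
          real_inner_self_eq_norm_sq, hη1.1]
        ring
      simpa [this] using hi
    have hfη : fη = 0 :=
      Lp.ext (hfη0.trans (Lp.coeFn_zero ℝ 2 (surfaceMeasure d Ω)).symm)
    have hffT : f = fT := by
      refine Lp.ext ?_
      filter_upwards [hdecomp, hfη0] with q hq hq0
      simp [hq.1, hq0]
    have hG : GSstar fT = 0 := by rw [← hffT]; exact hGf
    constructor <;> simp [hfη, hG]


end
end

section
/- Let Ω ⊂ ℝᵈ (d ≥ 3) be a bounded connected Lipschitz domain with connected boundary, and suppose the boundary Hardy spaces H₊(∂Ω) = range(B_o*) and H₋(∂Ω) = range(B_i*) are orthogonal in L²(∂Ω; ℝᵈ). Then the double layer potential operator K on L²(∂Ω) is self-adjoint, i.e. K = K*. -/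
open MeasureTheory Metric Filter Topology
open scoped RealInnerProductSpace ENNReal NNReal

noncomputable section

set_option maxHeartbeats 1000000 in
/-- If the boundary Hardy spaces `H₊(∂Ω) = range B_o*` and
`H₋(∂Ω) = range B_i*` are orthogonal in `L²(∂Ω; ℝᵈ)`, then the double layer
potential `K` is self-adjoint. Here
`B_i* g = η (1/2 + K*) g + ∇_T S g` and `B_o* g = −η (1/2 − K*) g + ∇_T S g`,
with `∇_T S` realized as the adjoint of `(∇_T S)*`. -/
theorem stmt16 {d : ℕ} (hd : 3 ≤ d) (Ω : Set (EuclideanSpace ℝ (Fin d)))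
    (hΩ : IsStronglyLipschitzDomain d Ω)
    -- the outward unit normal field on `∂Ω`
    (η : EuclideanSpace ℝ (Fin d) → EuclideanSpace ℝ (Fin d))
    (hη : ∀ᵐ q ∂(surfaceMeasure d Ω), ‖η q‖ = 1 ∧
      ∀ᶠ t in 𝓝[>] (0 : ℝ), q + t • η q ∈ (closure Ω)ᶜ ∧ q - t • η q ∈ Ω)
    -- the boundary double layer potential `K`
    (K : Lp ℝ 2 (surfaceMeasure d Ω) →L[ℝ] Lp ℝ 2 (surfaceMeasure d Ω))
    (hK : ∀ f : Lp ℝ 2 (surfaceMeasure d Ω), ∀ᵐ p ∂(surfaceMeasure d Ω),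
      Tendsto (fun ε : ℝ => (1 / sphereArea d) *
          ∫ q in {q | ε ≤ dist q p}, (⟪q - p, η q⟫ / dist q p ^ d) * f q
            ∂(surfaceMeasure d Ω))
        (𝓝[>] 0) (𝓝 (K f p)))
    -- `(∇_T S)*`, given by its principal value integral
    (GSstar : Lp (EuclideanSpace ℝ (Fin d)) 2 (surfaceMeasure d Ω) →L[ℝ]
        Lp ℝ 2 (surfaceMeasure d Ω))
    (hGSstar : ∀ τ : Lp (EuclideanSpace ℝ (Fin d)) 2 (surfaceMeasure d Ω),
      ∀ᵐ p ∂(surfaceMeasure d Ω),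
      Tendsto (fun ε : ℝ => (1 / sphereArea d) *
          ∫ q in {q | ε ≤ dist q p}, ⟪q - p, τ q⟫ / dist p q ^ d ∂(surfaceMeasure d Ω))
        (𝓝[>] 0) (𝓝 (GSstar τ p)))
    -- the adjoint boundary operators `B_i*` and `B_o*`
    (Bis Bos : Lp ℝ 2 (surfaceMeasure d Ω) →L[ℝ]
        Lp (EuclideanSpace ℝ (Fin d)) 2 (surfaceMeasure d Ω))
    (hBis : ∀ g : Lp ℝ 2 (surfaceMeasure d Ω),
      (Bis g : EuclideanSpace ℝ (Fin d) → EuclideanSpace ℝ (Fin d))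
        =ᵐ[surfaceMeasure d Ω] fun q =>
          (((1 / 2 : ℝ) • g + ContinuousLinearMap.adjoint K g) q) • η q +
            (ContinuousLinearMap.adjoint GSstar g) q)
    (hBos : ∀ g : Lp ℝ 2 (surfaceMeasure d Ω),
      (Bos g : EuclideanSpace ℝ (Fin d) → EuclideanSpace ℝ (Fin d))
        =ᵐ[surfaceMeasure d Ω] fun q =>
          (-(((1 / 2 : ℝ) • g - ContinuousLinearMap.adjoint K g) q)) • η q +
            (ContinuousLinearMap.adjoint GSstar g) q)
    -- the Hardy spaces `H₊ = range B_o*` and `H₋ = range B_i*` are orthogonal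
    (horth : ∀ φ χ : Lp ℝ 2 (surfaceMeasure d Ω), ⟪Bos φ, Bis χ⟫ = 0) :
    ContinuousLinearMap.adjoint K = K := by
  set Ks := ContinuousLinearMap.adjoint K with hKsdef
  set T := ContinuousLinearMap.adjoint GSstar with hTdef
  -- Pointwise description of `Bis g - Bos g`: it is `g • η` (the "multiplication by η" map).
  have hD : ∀ g : Lp ℝ 2 (surfaceMeasure d Ω),
      ((Bis g - Bos g : Lp (EuclideanSpace ℝ (Fin d)) 2 (surfaceMeasure d Ω)) :
        EuclideanSpace ℝ (Fin d) → EuclideanSpace ℝ (Fin d))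
        =ᵐ[surfaceMeasure d Ω] fun q => g q • η q := by
    intro g
    filter_upwards [Lp.coeFn_sub (Bis g) (Bos g), hBis g, hBos g,
      Lp.coeFn_add ((1 / 2 : ℝ) • g) (Ks g), Lp.coeFn_sub ((1 / 2 : ℝ) • g) (Ks g),
      Lp.coeFn_smul (1 / 2 : ℝ) g] with q h1 h2 h3 h4 h5 h6
    rw [h1, Pi.sub_apply, h2, h3, h4, h5, Pi.add_apply, Pi.sub_apply, h6, Pi.smul_apply, smul_eq_mul]
    module
  -- `GSstar` applied to `g • η` is `K g` (same principal value integral).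
  have hA : ∀ g : Lp ℝ 2 (surfaceMeasure d Ω), GSstar (Bis g - Bos g) = K g := by
    intro g
    apply Lp.ext
    filter_upwards [hGSstar (Bis g - Bos g), hK g] with p h1 h2
    have hfun : (fun ε : ℝ => (1 / sphereArea d) *
          ∫ q in {q | ε ≤ dist q p}, ⟪q - p, (Bis g - Bos g) q⟫ / dist p q ^ d
            ∂(surfaceMeasure d Ω))
        = fun ε : ℝ => (1 / sphereArea d) *
          ∫ q in {q | ε ≤ dist q p}, (⟪q - p, η q⟫ / dist q p ^ d) * g q
            ∂(surfaceMeasure d Ω) := by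
      funext ε
      congr 1
      apply integral_congr_ae
      refine ae_restrict_of_ae ?_
      filter_upwards [hD g] with q hq
      rw [hq, real_inner_smul_right, dist_comm p q]
      ring
    rw [hfun] at h1
    exact tendsto_nhds_unique h1 h2
  -- Inner products of two such elements reduce to scalar inner products.
  have hDD : ∀ f g : Lp ℝ 2 (surfaceMeasure d Ω),
      ⟪Bis f - Bos f, Bis g - Bos g⟫ = ⟪f, g⟫ := by
    intro f g
    rw [L2.inner_def, L2.inner_def]
    apply integral_congr_ae
    filter_upwards [hD f, hD g, hη] with q h1 h2 h3
    rw [h1, h2, real_inner_smul_left, real_inner_smul_right,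
      real_inner_self_eq_norm_sq, h3.1]
    simp [RCLike.inner_apply]
    ring
  have hDT : ∀ f g : Lp ℝ 2 (surfaceMeasure d Ω),
      ⟪Bis f - Bos f, T g⟫ = ⟪K f, g⟫ := by
    intro f g
    rw [hTdef, ContinuousLinearMap.adjoint_inner_right, hA]
  have hTD : ∀ f g : Lp ℝ 2 (surfaceMeasure d Ω),
      ⟪T f, Bis g - Bos g⟫ = ⟪K g, f⟫ := by
    intro f g
    rw [real_inner_comm, hDT]
  -- Decomposition of `Bis` and `Bos` at the level of `Lp` elements.
  have hBisEq : ∀ g : Lp ℝ 2 (surfaceMeasure d Ω),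
      Bis g = (Bis ((1 / 2 : ℝ) • g + Ks g) - Bos ((1 / 2 : ℝ) • g + Ks g)) + T g := by
    intro g
    apply Lp.ext
    filter_upwards [hBis g, hD ((1 / 2 : ℝ) • g + Ks g),
      Lp.coeFn_add (Bis ((1 / 2 : ℝ) • g + Ks g) - Bos ((1 / 2 : ℝ) • g + Ks g)) (T g)]
      with q h1 h2 h3
    rw [h1, h3, Pi.add_apply, h2]
  have hBosEq : ∀ g : Lp ℝ 2 (surfaceMeasure d Ω),
      Bos g = -(Bis ((1 / 2 : ℝ) • g - Ks g) - Bos ((1 / 2 : ℝ) • g - Ks g)) + T g := by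
    intro g
    apply Lp.ext
    filter_upwards [hBos g, hD ((1 / 2 : ℝ) • g - Ks g),
      Lp.coeFn_add (-(Bis ((1 / 2 : ℝ) • g - Ks g) - Bos ((1 / 2 : ℝ) • g - Ks g))) (T g),
      Lp.coeFn_neg (Bis ((1 / 2 : ℝ) • g - Ks g) - Bos ((1 / 2 : ℝ) • g - Ks g))]
      with q h1 h2 h3 h4
    rw [h1, h3, Pi.add_apply, h4, Pi.neg_apply, h2, neg_smul]
  -- The orthogonality relation, fully expanded into scalar inner products.
  have keyS : ∀ ψ ξ : Lp ℝ 2 (surfaceMeasure d Ω),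
      -(1 / 4 : ℝ) * ⟪ψ, ξ⟫ - ⟪K ψ, ξ⟫ + ⟪K ξ, ψ⟫ + 3 * ⟪Ks ψ, Ks ξ⟫ + ⟪T ψ, T ξ⟫ = 0 := by
    intro ψ ξ
    have h0 := horth ψ ξ
    rw [hBosEq ψ, hBisEq ξ, inner_add_left, inner_add_right, inner_add_right,
      inner_neg_left, inner_neg_left, hDD, hDT, hTD] at h0
    have e1 : ⟪ψ, Ks ξ⟫ = ⟪K ψ, ξ⟫ := ContinuousLinearMap.adjoint_inner_right K ψ ξ
    have e2 : ⟪Ks ψ, ξ⟫ = ⟪K ξ, ψ⟫ := by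
      rw [hKsdef, ContinuousLinearMap.adjoint_inner_left, real_inner_comm]
    have e3 : ⟪K (Ks ψ), ξ⟫ = ⟪Ks ψ, Ks ξ⟫ :=
      (ContinuousLinearMap.adjoint_inner_right K (Ks ψ) ξ).symm
    have e4 : ⟪K (Ks ξ), ψ⟫ = ⟪Ks ψ, Ks ξ⟫ := by
      rw [← ContinuousLinearMap.adjoint_inner_right, real_inner_comm]
    simp only [map_sub, map_add, _root_.map_smul, inner_sub_left, inner_add_left,
      inner_add_right, inner_sub_right, real_inner_smul_left, real_inner_smul_right,
      smul_eq_mul] at h0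
    simp only [e1, e2, e3, e4] at h0
    linarith [h0]
  -- Antisymmetrize to get the symmetry of `K`.
  have hsym : ∀ φ χ : Lp ℝ 2 (surfaceMeasure d Ω), ⟪K φ, χ⟫ = ⟪K χ, φ⟫ := by
    intro φ χ
    have h1 := keyS φ χ
    have h2 := keyS χ φ
    have c1 : ⟪φ, χ⟫ = ⟪χ, φ⟫ := real_inner_comm _ _
    have c2 : ⟪Ks φ, Ks χ⟫ = ⟪Ks χ, Ks φ⟫ := real_inner_comm _ _
    have c3 : ⟪T φ, T χ⟫ = ⟪T χ, T φ⟫ := real_inner_comm _ _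
    linarith
  refine ContinuousLinearMap.ext fun χ => ?_
  refine ext_inner_right ℝ fun φ => ?_
  rw [hKsdef, ContinuousLinearMap.adjoint_inner_left, real_inner_comm, hsym]

end
end
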